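/- Complexity recursion bound for multilevel Picard schemes: suppose nonnegative integers C_{n,M} satisfy, for all n, M ∈ N, C_{n,M} ≤ M^n (M^M e + g)·1_{N}(n) + Σ_{l=0}^{n−1} M^{n−l}(M^M e + f + C_{l,M} + C_{l−1,M}) (with C_{0,M} and C_{−1,M} interpreted as 0 where appropriate). Then for all n ∈ N, Σ_{k=1}^{n+1} C_{k,k} ≤ 12(3e + g + 2f)·36^n·n^{2n}. -/

import Mathlib

/-- Auxiliary: geometric sum identity for base 3. -/
lemma aux_geom3 : ∀ m : ℕ, 2 * (∑ l ∈ Finset.range m, 3 ^ l) + 1 = 3 ^ m := by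
  intro m
  induction m with
  | zero => simp
  | succ m ih => rw [Finset.sum_range_succ, pow_succ]; omega

/-- Auxiliary: cube growth bound. -/
lemma aux_cube : ∀ m : ℕ, (m + 3) ^ 3 ≤ 4 * 3 ^ (m + 2) := by
  intro m
  induction m with
  | zero => norm_num
  | succ m ih =>
      have h1 : (m + 1 + 3) ^ 3 ≤ 3 * (m + 3) ^ 3 := by
        nlinarith [Nat.zero_le (m * m * m), Nat.zero_le (m * m), Nat.zero_le m]
      calc (m + 1 + 3) ^ 3 ≤ 3 * (m + 3) ^ 3 := h1
        _ ≤ 3 * (4 * 3 ^ (m + 2)) := by omega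
        _ = 4 * 3 ^ (m + 1 + 2) := by ring

set_option maxHeartbeats 1000000 in
/-- Complexity recursion bound for multilevel Picard schemes:
if nonnegative integers `C n M` (with `C n M = 0` for `n ≤ 0`) satisfy the MLP
cost recursion, then `Σ_{k=1}^{n+1} C k k ≤ 12(3e+g+2f)·36^n·n^{2n}`. -/
theorem stmt15
    (e g f : ℕ) (he : 0 < e) (hg : 0 < g) (hf : 0 < f)
    (C : ℤ → ℕ → ℕ)
    (hzero : ∀ n : ℤ, n ≤ 0 → ∀ M : ℕ, C n M = 0)
    (hrec : ∀ n M : ℕ, 1 ≤ M →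
      C n M ≤ (if 1 ≤ n then M ^ n * (M ^ M * e + g) else 0)
        + ∑ l ∈ Finset.range n,
            M ^ (n - l) * (M ^ M * e + f + C l M + C ((l : ℤ) - 1) M)) :
    ∀ n : ℕ, 1 ≤ n →
      ∑ k ∈ Finset.Icc 1 (n + 1), C k k
        ≤ 12 * (3 * e + g + 2 * f) * 36 ^ n * n ^ (2 * n) := by
  set D := 3 * e + g + 2 * f with hDdef
  -- Key bound: C n M ≤ D * M^M * M^n * 3^n
  have key : ∀ n : ℕ, ∀ M : ℕ, 1 ≤ M → C n M ≤ D * M ^ M * (M ^ n * 3 ^ n) := by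
    intro n
    induction n using Nat.strong_induction_on with
    | _ n IH =>
      intro M hM
      have ha : 1 ≤ M ^ M := Nat.one_le_pow _ _ hM
      rcases Nat.eq_zero_or_pos n with rfl | hn1
      · have h0 : C 0 M = 0 := hzero 0 le_rfl M
        simp [h0]
      · have h := hrec n M hM
        rw [if_pos (by omega : 1 ≤ n)] at h
        -- bound each summand
        have hsum : ∑ l ∈ Finset.range n,
              M ^ (n - l) * (M ^ M * e + f + C l M + C ((l : ℤ) - 1) M)
            ≤ ∑ l ∈ Finset.range n,
              (M ^ M * M ^ n * (e + f) + D * (M ^ M) * (M ^ n) * 3 ^ l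
                + D * (M ^ M) * (M ^ n) * (if l = 0 then 0 else 3 ^ (l - 1))) := by
          apply Finset.sum_le_sum
          intro l hl
          have hl' : l < n := Finset.mem_range.mp hl
          have h1 : C (l : ℤ) M ≤ D * M ^ M * (M ^ l * 3 ^ l) := IH l hl' M hM
          have e1 : M ^ (n - l) * (M ^ M * e + f) ≤ M ^ M * M ^ n * (e + f) := by
            have hf' : M ^ M * e + f ≤ M ^ M * (e + f) := by nlinarith
            calc M ^ (n - l) * (M ^ M * e + f)
                ≤ M ^ n * (M ^ M * (e + f)) :=
                  Nat.mul_le_mul (Nat.pow_le_pow_right hM (Nat.sub_le n l)) hf'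
              _ = M ^ M * M ^ n * (e + f) := by ring
          have e2 : M ^ (n - l) * C (l : ℤ) M ≤ D * (M ^ M) * (M ^ n) * 3 ^ l := by
            calc M ^ (n - l) * C (l : ℤ) M
                ≤ M ^ (n - l) * (D * M ^ M * (M ^ l * 3 ^ l)) :=
                  Nat.mul_le_mul_left _ h1
              _ = D * (M ^ M) * (M ^ (n - l) * M ^ l) * 3 ^ l := by ring
              _ = D * (M ^ M) * (M ^ n) * 3 ^ l := by
                  rw [← pow_add, Nat.sub_add_cancel hl'.le]
          have e3 : M ^ (n - l) * C ((l : ℤ) - 1) M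
              ≤ D * (M ^ M) * (M ^ n) * (if l = 0 then 0 else 3 ^ (l - 1)) := by
            rcases Nat.eq_zero_or_pos l with rfl | hl0
            · have h00 : C (-1) M = 0 := hzero (-1) (by norm_num) M
              simp [h00]
            · rw [if_neg (by omega)]
              have hcast : ((l : ℤ) - 1) = ((l - 1 : ℕ) : ℤ) := by
                push_cast [Nat.cast_sub hl0]; ring
              have h2 : C ((l : ℤ) - 1) M ≤ D * M ^ M * (M ^ (l - 1) * 3 ^ (l - 1)) := by
                rw [hcast]; exact IH (l - 1) (by omega) M hM
              calc M ^ (n - l) * C ((l : ℤ) - 1) M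
                  ≤ M ^ (n - l) * (D * M ^ M * (M ^ (l - 1) * 3 ^ (l - 1))) :=
                    Nat.mul_le_mul_left _ h2
                _ = D * (M ^ M) * (M ^ (n - l) * M ^ (l - 1)) * 3 ^ (l - 1) := by ring
                _ ≤ D * (M ^ M) * (M ^ n) * 3 ^ (l - 1) := by
                    have hmn : M ^ (n - l) * M ^ (l - 1) = M ^ (n - 1) := by
                      rw [← pow_add]; congr 1; omega
                    rw [hmn]
                    exact Nat.mul_le_mul
                      (Nat.mul_le_mul_left _ (Nat.pow_le_pow_right hM (by omega))) le_rfl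
          calc M ^ (n - l) * (M ^ M * e + f + C (l : ℤ) M + C ((l : ℤ) - 1) M)
              = M ^ (n - l) * (M ^ M * e + f) + M ^ (n - l) * C (l : ℤ) M
                + M ^ (n - l) * C ((l : ℤ) - 1) M := by ring
            _ ≤ _ := add_le_add (add_le_add e1 e2) e3
        -- shift identity for the second geometric sum
        have hshift : ∑ l ∈ Finset.range n, (if l = 0 then 0 else 3 ^ (l - 1) : ℕ)
            = ∑ l ∈ Finset.range (n - 1), 3 ^ l := by
          obtain ⟨m, rfl⟩ : ∃ m, n = m + 1 := ⟨n - 1, by omega⟩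
          rw [Finset.sum_range_succ']
          simp
        have hnP : n ≤ 2 * 3 ^ (n - 1) := by
          obtain ⟨m, rfl⟩ : ∃ m, n = m + 1 := ⟨n - 1, by omega⟩
          simp only [Nat.add_sub_cancel]
          have h1 : m < 3 ^ m := Nat.lt_pow_self (by norm_num)
          linarith
        have hP : (3 : ℕ) ^ n = 3 * 3 ^ (n - 1) := by
          rw [← pow_succ']; congr 1; omega
        have hS := aux_geom3 n
        have hS' := aux_geom3 (n - 1)
        rw [hP] at hS
        set S := ∑ l ∈ Finset.range n, (3 : ℕ) ^ l with hSdef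
        set S' := ∑ l ∈ Finset.range (n - 1), (3 : ℕ) ^ l with hS'def
        set a := M ^ M with hadef
        set b := M ^ n with hbdef
        have hrhs : ∑ l ∈ Finset.range n,
              (a * b * (e + f) + D * a * b * 3 ^ l
                + D * a * b * (if l = 0 then 0 else 3 ^ (l - 1)))
            = n * (a * b * (e + f)) + D * a * b * S + D * a * b * S' := by
          rw [Finset.sum_add_distrib, Finset.sum_add_distrib, Finset.sum_const,
            Finset.card_range, ← Finset.mul_sum, ← Finset.mul_sum, hshift, smul_eq_mul]
        rw [hrhs] at hsum
        -- final arithmetic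
        have goal2 : b * (a * e + g) + (n * (a * b * (e + f)) + D * a * b * S + D * a * b * S')
            ≤ D * a * (b * 3 ^ n) := by
          rw [hP]
          have hae : a * e + g ≤ a * D := by
            have hga : g ≤ a * g := Nat.le_mul_of_pos_left g (by omega)
            have : a * D = a * e + (a * (2 * e + 2 * f) + a * g) := by rw [hDdef]; ring
            rw [this]
            have : a * e ≤ a * e + a * (2 * e + 2 * f) := Nat.le_add_right _ _
            omega
          have h3 : b * (a * e + g) ≤ D * a * b := by
            calc b * (a * e + g) ≤ b * (a * D) := Nat.mul_le_mul_left _ hae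
              _ = D * a * b := by ring
          have h4 : n * (a * b * (e + f)) * 2 ≤ D * a * b * (2 * 3 ^ (n - 1)) := by
            calc n * (a * b * (e + f)) * 2 = n * (a * b * (2 * (e + f))) := by ring
              _ ≤ (2 * 3 ^ (n - 1)) * (a * b * D) :=
                  Nat.mul_le_mul hnP (Nat.mul_le_mul_left _ (by omega))
              _ = D * a * b * (2 * 3 ^ (n - 1)) := by ring
          have h1 : D * a * b * (2 * S) + D * a * b = D * a * b * (3 * 3 ^ (n - 1)) := by
            calc D * a * b * (2 * S) + D * a * b = D * a * b * (2 * S + 1) := by ring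
              _ = D * a * b * (3 * 3 ^ (n - 1)) := by rw [hS]
          have h2 : D * a * b * (2 * S') + D * a * b = D * a * b * 3 ^ (n - 1) := by
            calc D * a * b * (2 * S') + D * a * b = D * a * b * (2 * S' + 1) := by ring
              _ = D * a * b * 3 ^ (n - 1) := by rw [hS']
          linarith [h1, h2, h3, h4]
        calc C (n : ℤ) M ≤ b * (a * e + g)
              + ∑ l ∈ Finset.range n, M ^ (n - l) * (a * e + f + C (l : ℤ) M + C ((l : ℤ) - 1) M) := h
          _ ≤ b * (a * e + g) + (n * (a * b * (e + f)) + D * a * b * S + D * a * b * S') :=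
              Nat.add_le_add_left hsum _
          _ ≤ D * a * (b * 3 ^ n) := goal2
  -- Now the main sum
  intro n hn
  have bound : ∀ k ∈ Finset.Icc 1 (n + 1),
      C (k : ℤ) k ≤ D * (3 ^ (n + 1) * (n + 1) ^ (2 * n + 2)) := by
    intro k hk
    obtain ⟨hk1, hk2⟩ := Finset.mem_Icc.mp hk
    have hkey := key k k hk1
    calc C (k : ℤ) k ≤ D * k ^ k * (k ^ k * 3 ^ k) := hkey
      _ = D * (3 ^ k * (k ^ k * k ^ k)) := by ring
      _ ≤ D * (3 ^ (n + 1) * ((n + 1) ^ (n + 1) * (n + 1) ^ (n + 1))) := by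
          apply Nat.mul_le_mul_left
          apply Nat.mul_le_mul
          · exact Nat.pow_le_pow_right (by norm_num) hk2
          · have hkk : k ^ k ≤ (n + 1) ^ (n + 1) :=
              le_trans (Nat.pow_le_pow_left hk2 k)
                (Nat.pow_le_pow_right (by omega) hk2)
            exact Nat.mul_le_mul hkk hkk
      _ = D * (3 ^ (n + 1) * (n + 1) ^ (2 * n + 2)) := by
          rw [show 2 * n + 2 = (n + 1) + (n + 1) from by ring]
          ring
  have hsum := Finset.sum_le_sum bound
  rw [Finset.sum_const, Nat.card_Icc] at hsum
  have hcard : n + 1 + 1 - 1 = n + 1 := by omega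
  rw [hcard, smul_eq_mul] at hsum
  -- final numeric inequality
  have cube : (n + 1) ^ 3 ≤ 4 * 3 ^ n := by
    rcases Nat.lt_or_ge n 2 with h | h
    · interval_cases n <;> norm_num
    · obtain ⟨m, rfl⟩ : ∃ m, n = m + 2 := ⟨n - 2, by omega⟩
      have hc := aux_cube m
      calc (m + 2 + 1) ^ 3 = (m + 3) ^ 3 := by ring
        _ ≤ 4 * 3 ^ (m + 2) := hc
  have sq : ((n + 1) ^ 2) ^ n ≤ (4 * n ^ 2) ^ n := by
    apply Nat.pow_le_pow_left
    nlinarith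
  have main : (n + 1) * (D * (3 ^ (n + 1) * (n + 1) ^ (2 * n + 2)))
      ≤ 12 * D * 36 ^ n * n ^ (2 * n) := by
    have key3 : 3 ^ (n + 1) * (n + 1) ^ (2 * n + 3) ≤ 12 * 36 ^ n * n ^ (2 * n) := by
      have e1 : (n + 1) ^ (2 * n + 3) = ((n + 1) ^ 2) ^ n * (n + 1) ^ 3 := by
        rw [← pow_mul, ← pow_add]
      have e2 : (4 * n ^ 2) ^ n = 4 ^ n * n ^ (2 * n) := by
        rw [mul_pow, ← pow_mul]
      calc 3 ^ (n + 1) * (n + 1) ^ (2 * n + 3)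
          = 3 ^ (n + 1) * (((n + 1) ^ 2) ^ n * (n + 1) ^ 3) := by rw [e1]
        _ ≤ 3 ^ (n + 1) * ((4 ^ n * n ^ (2 * n)) * (4 * 3 ^ n)) := by
            apply Nat.mul_le_mul_left
            apply Nat.mul_le_mul _ cube
            rw [← e2]; exact sq
        _ = 12 * 36 ^ n * n ^ (2 * n) := by
            have h36 : (36 : ℕ) ^ n = 4 ^ n * (3 ^ n * 3 ^ n) := by
              rw [show (36 : ℕ) = 4 * (3 * 3) by norm_num, mul_pow, mul_pow]
            rw [h36, pow_succ]
            ring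
    calc (n + 1) * (D * (3 ^ (n + 1) * (n + 1) ^ (2 * n + 2)))
        = D * (3 ^ (n + 1) * ((n + 1) ^ (2 * n + 2) * (n + 1))) := by ring
      _ = D * (3 ^ (n + 1) * (n + 1) ^ (2 * n + 3)) := by rw [← pow_succ]
      _ ≤ D * (12 * 36 ^ n * n ^ (2 * n)) := Nat.mul_le_mul_left _ key3
      _ = 12 * D * 36 ^ n * n ^ (2 * n) := by ring
  exact le_trans hsum main
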